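/- arXiv:1102.3446 — 3 statements merged into one kernel-verified Lean document; each statement's English description precedes it below -/
import Mathlib

section
/- The function u₁(t) = tanh(t/√2) satisfies u₁'' + u₁ - u₁³ = 0 on ℝ, u₁(0) = 0, lim_{t→+∞} u₁(t) = 1 and lim_{t→-∞} u₁(t) = -1. Moreover it is the unique such solution: if v : ℝ → ℝ is twice continuously differentiable, satisfies v'' + v - v³ = 0 on ℝ, v(0) = 0, lim_{t→+∞} v(t) = 1 and lim_{t→-∞} v(t) = -1, then v = u₁. -/
open Filter

/-- The heteroclinic solution `u₁(t) = tanh(t/√2)` of the one-dimensional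
Allen–Cahn equation. -/
noncomputable def u₁ (t : ℝ) : ℝ := Real.tanh (t / Real.sqrt 2)

open Real Set

lemma tanh_hasDerivAt (x : ℝ) : HasDerivAt Real.tanh (1 - Real.tanh x ^ 2) x := by
  have h : Real.tanh = fun x => Real.sinh x / Real.cosh x := by
    funext y; exact Real.tanh_eq_sinh_div_cosh y
  rw [h]
  have := ((Real.hasDerivAt_sinh x).div (Real.hasDerivAt_cosh x) (Real.cosh_pos x).ne')
  refine this.congr_deriv (Eq.symm ?_)
  have h1 : Real.cosh x ^ 2 - Real.sinh x ^ 2 = 1 := Real.cosh_sq_sub_sinh_sq x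
  have h2 := (Real.cosh_pos x).ne'
  field_simp

lemma tanh_lt_one' (x : ℝ) : Real.tanh x < 1 := by
  rw [Real.tanh_eq_sinh_div_cosh, div_lt_one (Real.cosh_pos x)]
  rw [Real.sinh_eq, Real.cosh_eq]
  have := Real.exp_pos (-x)
  linarith

lemma neg_one_lt_tanh' (x : ℝ) : -1 < Real.tanh x := by
  rw [Real.tanh_eq_sinh_div_cosh, lt_div_iff₀ (Real.cosh_pos x)]
  rw [Real.sinh_eq, Real.cosh_eq]
  have := Real.exp_pos x
  linarith

lemma tanh_eq_aux (x : ℝ) :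
    Real.tanh x = (1 - Real.exp (-2*x)) / (1 + Real.exp (-2*x)) := by
  rw [Real.tanh_eq_sinh_div_cosh, Real.sinh_eq, Real.cosh_eq]
  have h1 : Real.exp (-2*x) = Real.exp (-x) * Real.exp (-x) := by
    rw [← Real.exp_add]; ring_nf
  have h2 : Real.exp x * Real.exp (-x) = 1 := by
    rw [← Real.exp_add]; simp
  have h3 := Real.exp_pos x
  have h4 := Real.exp_pos (-x)
  field_simp
  ring_nf
  ring_nf at h1 h2
  nlinarith

lemma tendsto_tanh_atTop : Tendsto Real.tanh atTop (nhds 1) := by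
  have h1 : Tendsto (fun x : ℝ => Real.exp (-2*x)) atTop (nhds 0) := by
    apply Real.tendsto_exp_atBot.comp
    have h := tendsto_neg_atTop_atBot.comp
      ((tendsto_const_mul_atTop_of_pos (by norm_num : (0:ℝ) < 2)).mpr tendsto_id)
    exact h.congr (fun x => by simp [Function.comp_apply, neg_mul])
  have h2 : Tendsto (fun x : ℝ => (1 - Real.exp (-2*x)) / (1 + Real.exp (-2*x)))
      atTop (nhds 1) := by
    have := ((tendsto_const_nhds (x := (1:ℝ))).sub h1).div
      ((tendsto_const_nhds (x := (1:ℝ))).add h1) (by norm_num)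
    rw [show ((1:ℝ) - 0) / (1 + 0) = 1 by norm_num] at this; exact this
  exact h2.congr (fun x => (tanh_eq_aux x).symm)

lemma tanh_eq_aux2 (x : ℝ) :
    Real.tanh x = (Real.exp (2*x) - 1) / (Real.exp (2*x) + 1) := by
  rw [tanh_eq_aux]
  have h1 : Real.exp (-2*x) * Real.exp (2*x) = 1 := by rw [← Real.exp_add]; ring_nf; simp
  have h3 := Real.exp_pos (2*x)
  have h4 := Real.exp_pos (-2*x)
  field_simp
  ring_nf
  ring_nf at h1
  nlinarith

lemma tendsto_tanh_atBot : Tendsto Real.tanh atBot (nhds (-1)) := by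
  have h1 : Tendsto (fun x : ℝ => Real.exp (2*x)) atBot (nhds 0) := by
    apply Real.tendsto_exp_atBot.comp
    exact (tendsto_const_mul_atBot_of_pos (by norm_num : (0:ℝ) < 2)).mpr tendsto_id
  have h2 : Tendsto (fun x : ℝ => (Real.exp (2*x) - 1) / (Real.exp (2*x) + 1))
      atBot (nhds (-1)) := by
    have := (h1.sub (tendsto_const_nhds (x := (1:ℝ)))).div
      (h1.add (tendsto_const_nhds (x := (1:ℝ)))) (by norm_num)
    rw [show ((0:ℝ) - 1) / (0 + 1) = -1 by norm_num] at this; exact this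
  exact h2.congr (fun x => (tanh_eq_aux2 x).symm)

lemma sqrt2_pos : (0:ℝ) < Real.sqrt 2 := by positivity

lemma u₁_hasDerivAt (t : ℝ) :
    HasDerivAt u₁ ((1 - u₁ t ^ 2) / Real.sqrt 2) t := by
  have h := (tanh_hasDerivAt (t / Real.sqrt 2)).comp t
    ((hasDerivAt_id t).div_const (Real.sqrt 2))
  rw [show u₁ = fun t => Real.tanh (t / Real.sqrt 2) from rfl]
  simpa [div_eq_mul_inv, mul_comm, Function.comp_def] using h

lemma deriv_u₁_eq : deriv u₁ = fun t => (1 - u₁ t ^ 2) / Real.sqrt 2 := by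
  funext t; exact (u₁_hasDerivAt t).deriv

lemma u₁_deriv2 (t : ℝ) : deriv (deriv u₁) t = u₁ t ^ 3 - u₁ t := by
  rw [deriv_u₁_eq]
  have h : HasDerivAt (fun s => (1 - u₁ s ^ 2) / Real.sqrt 2)
      ((0 - 2 * u₁ t ^ 1 * ((1 - u₁ t ^ 2) / Real.sqrt 2)) / Real.sqrt 2) t := by
    exact (((hasDerivAt_const t (1:ℝ)).sub ((u₁_hasDerivAt t).pow 2)).div_const _)
  rw [h.deriv]
  have h2 : Real.sqrt 2 * Real.sqrt 2 = 2 := Real.mul_self_sqrt (by norm_num)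
  field_simp
  ring_nf
  linear_combination (u₁ t - u₁ t ^ 3) * h2

lemma zero_of_self_bound {W W' : ℝ → ℝ} {K a b t₀ : ℝ} (ht₀ : t₀ ∈ Set.Ioo a b)
    (hW : ∀ t ∈ Set.Ioo a b, HasDerivAt W (W' t) t)
    (hW0 : ∀ t ∈ Set.Ioo a b, 0 ≤ W t)
    (hbound : ∀ t ∈ Set.Ioo a b, |W' t| ≤ K * W t) (hWt₀ : W t₀ = 0) :
    ∀ t ∈ Set.Ioo a b, W t = 0 := by
  intro t ht
  -- φ t = W t * exp (-K t) is antitone; ψ t = W t * exp (K t) is monotone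
  have hφd : ∀ s ∈ Set.Ioo a b, HasDerivAt (fun s => W s * Real.exp (-K * s))
      ((W' s - K * W s) * Real.exp (-K * s)) s := by
    intro s hs
    have h := (hW s hs).mul (((hasDerivAt_id s).const_mul (-K)).exp)
    refine h.congr_deriv (Eq.symm ?_)
    simp only [id]
    ring
  have hψd : ∀ s ∈ Set.Ioo a b, HasDerivAt (fun s => W s * Real.exp (K * s))
      ((W' s + K * W s) * Real.exp (K * s)) s := by
    intro s hs
    have h := (hW s hs).mul (((hasDerivAt_id s).const_mul K).exp)
    refine h.congr_deriv (Eq.symm ?_)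
    simp only [id]
    ring
  have hconv : Convex ℝ (Set.Ioo a b) := convex_Ioo a b
  have hint : interior (Set.Ioo a b) = Set.Ioo a b := interior_Ioo
  rcases le_or_gt t₀ t with hle | hlt
  · -- use φ antitone on Ioo
    have hanti : AntitoneOn (fun s => W s * Real.exp (-K * s)) (Set.Ioo a b) := by
      apply antitoneOn_of_deriv_nonpos hconv
      · exact fun s hs => ((hφd s hs).continuousAt).continuousWithinAt
      · intro s hs
        rw [hint] at hs
        exact (hφd s hs).differentiableAt.differentiableWithinAt
      · intro s hs
        rw [hint] at hs
        rw [(hφd s hs).deriv]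
        have h1 := hbound s hs
        have h2 := abs_le.mp h1
        have := Real.exp_pos (-K * s)
        nlinarith [this.le, h2.2]
    have h1 := hanti ht₀ ht hle
    have h2 : (0:ℝ) ≤ W t * Real.exp (-K * t) :=
      mul_nonneg (hW0 t ht) (Real.exp_pos _).le
    simp only [hWt₀, zero_mul] at h1
    have := Real.exp_pos (-K * t)
    nlinarith
  · have hmono : MonotoneOn (fun s => W s * Real.exp (K * s)) (Set.Ioo a b) := by
      apply monotoneOn_of_deriv_nonneg hconv
      · exact fun s hs => ((hψd s hs).continuousAt).continuousWithinAt
      · intro s hs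
        rw [hint] at hs
        exact (hψd s hs).differentiableAt.differentiableWithinAt
      · intro s hs
        rw [hint] at hs
        rw [(hψd s hs).deriv]
        have h2 := abs_le.mp (hbound s hs)
        have := Real.exp_pos (K * s)
        nlinarith [this.le, h2.1]
    have h1 := hmono ht ht₀ hlt.le
    have h2 : (0:ℝ) ≤ W t * Real.exp (K * t) :=
      mul_nonneg (hW0 t ht) (Real.exp_pos _).le
    simp only [hWt₀, zero_mul] at h1
    have := Real.exp_pos (K * t)
    nlinarith

set_option maxHeartbeats 2000000 in
/-- `u₁(t) = tanh(t/√2)` solves `u'' + u - u³ = 0`, vanishes at `0`, tends to `±1` at `±∞`,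
and is the unique such solution. -/
theorem u₁_solves_and_unique :
    (∀ t : ℝ, deriv (deriv u₁) t + u₁ t - (u₁ t) ^ 3 = 0) ∧
    u₁ 0 = 0 ∧
    Tendsto u₁ atTop (nhds 1) ∧
    Tendsto u₁ atBot (nhds (-1)) ∧
    (∀ v : ℝ → ℝ, ContDiff ℝ 2 v →
      (∀ t : ℝ, deriv (deriv v) t + v t - (v t) ^ 3 = 0) →
      v 0 = 0 →
      Tendsto v atTop (nhds 1) →
      Tendsto v atBot (nhds (-1)) →
      v = u₁) := by
  have hsq2 : Real.sqrt 2 * Real.sqrt 2 = 2 := Real.mul_self_sqrt (by norm_num)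
  have hdivTop : Tendsto (fun t : ℝ => t / Real.sqrt 2) atTop atTop :=
    tendsto_id.atTop_div_const sqrt2_pos
  refine ⟨fun t => by rw [u₁_deriv2]; ring, by simp [u₁], ?_, ?_, ?_⟩
  · exact tendsto_tanh_atTop.comp hdivTop
  · exact tendsto_tanh_atBot.comp (tendsto_id.atBot_div_const sqrt2_pos)
  intro v hv hode hv0 htop hbot
  -- regularity
  have hd1 : Differentiable ℝ v := hv.differentiable two_ne_zero
  have hdd : ContDiff ℝ 1 (deriv v) := by
    have h2 : ContDiff ℝ ((1:ℕ∞) + 1) v := by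
      convert hv using 2
      norm_num
    exact (contDiff_succ_iff_deriv.mp h2).2.2
  have hd2 : Differentiable ℝ (deriv v) := hdd.differentiable one_ne_zero
  have hcv : Continuous v := hd1.continuous
  have hcv' : Continuous (deriv v) := hd2.continuous
  -- energy is constant
  set E : ℝ → ℝ := fun t => (deriv v t) ^ 2 / 2 + (v t) ^ 2 / 2 - (v t) ^ 4 / 4 with hEdef
  have hEd : ∀ t, HasDerivAt E 0 t := by
    intro t
    have h1 : HasDerivAt v (deriv v t) t := (hd1 t).hasDerivAt
    have h2 : HasDerivAt (deriv v) (deriv (deriv v) t) t := (hd2 t).hasDerivAt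
    have h := (((h2.pow 2).div_const 2).add ((h1.pow 2).div_const 2)).sub
      ((h1.pow 4).div_const 4)
    refine h.congr_deriv (Eq.symm ?_)
    have h0 : deriv (deriv v) t = v t ^ 3 - v t := by linarith [hode t]
    rw [h0]; ring
  have hEconst : ∀ t, E t = E 0 := fun t =>
    is_const_of_deriv_eq_zero (fun s => (hEd s).differentiableAt)
      (fun s => (hEd s).deriv) t 0
  have hEt : ∀ t, (deriv v t) ^ 2 / 2 + (v t) ^ 2 / 2 - (v t) ^ 4 / 4 = E 0 := hEconst
  have hdvsq : ∀ t, (deriv v t) ^ 2 = 2 * E 0 - (v t) ^ 2 + (v t) ^ 4 / 2 := by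
    intro t; linarith [hEt t]
  -- the energy level is 1/4
  have hE0 : E 0 = 1 / 4 := by
    have hL : Tendsto (fun t => (deriv v t) ^ 2) atTop (nhds (2 * E 0 - 1 / 2)) := by
      have h1 : Tendsto (fun t => 2 * E 0 - (v t) ^ 2 + (v t) ^ 4 / 2) atTop
          (nhds (2 * E 0 - 1 ^ 2 + 1 ^ 4 / 2)) :=
        (tendsto_const_nhds.sub (htop.pow 2)).add ((htop.pow 4).div_const 2)
      have h2 : (2 * E 0 - 1 ^ 2 + 1 ^ 4 / 2 : ℝ) = 2 * E 0 - 1 / 2 := by ring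
      rw [h2] at h1
      exact h1.congr fun t => (hdvsq t).symm
    by_contra hne
    have hLnn : 0 ≤ 2 * E 0 - 1 / 2 := ge_of_tendsto' hL fun t => sq_nonneg _
    have hLpos : 0 < 2 * E 0 - 1 / 2 := by
      rcases hLnn.lt_or_eq with h | h
      · exact h
      · exact absurd (by linarith : E 0 = 1 / 4) hne
    set c : ℝ := Real.sqrt ((2 * E 0 - 1 / 2) / 2) with hc
    have hcpos : 0 < c := Real.sqrt_pos.mpr (by linarith)
    have hcsq : c ^ 2 = (2 * E 0 - 1 / 2) / 2 := Real.sq_sqrt (by linarith)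
    have h1 : ∀ᶠ t in atTop, c ^ 2 < (deriv v t) ^ 2 := by
      apply hL.eventually
      apply eventually_gt_nhds
      rw [hcsq]; linarith
    have h2 : ∀ᶠ t in atTop, v t ∈ Set.Ioo (0 : ℝ) 2 :=
      htop.eventually (Ioo_mem_nhds (by norm_num) (by norm_num))
    obtain ⟨T, hT⟩ := eventually_atTop.mp (h1.and h2)
    set t₁ : ℝ := T + 4 / c with ht₁
    have hTt₁ : T < t₁ := by
      have : 0 < 4 / c := by positivity
      rw [ht₁]; linarith
    obtain ⟨s, hs, hslope⟩ := exists_hasDerivAt_eq_slope v (deriv v) hTt₁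
      hcv.continuousOn (fun x _ => (hd1 x).hasDerivAt)
    have hsT : T ≤ s := hs.1.le
    have h3 := hT s hsT
    have h4 := hT T le_rfl
    have h5 := hT t₁ hTt₁.le
    have hdiff : v t₁ - v T = deriv v s * (t₁ - T) := by
      rw [hslope, div_mul_cancel₀]
      exact sub_ne_zero.mpr hTt₁.ne'
    have ht₁T : t₁ - T = 4 / c := by rw [ht₁]; ring
    have hsq : (v t₁ - v T) ^ 2 = (deriv v s) ^ 2 * (t₁ - T) ^ 2 := by
      rw [hdiff]; ring
    have hgt : (deriv v s) ^ 2 * (t₁ - T) ^ 2 > c ^ 2 * (t₁ - T) ^ 2 := by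
      apply mul_lt_mul_of_pos_right h3.1
      have : (0:ℝ) < 4 / c := by positivity
      nlinarith
    have h16 : c ^ 2 * (t₁ - T) ^ 2 = 16 := by
      rw [ht₁T]
      field_simp
      norm_num
    nlinarith [h4.2.1, h4.2.2, h5.2.1, h5.2.2]
  -- pointwise first-order relation for the square
  have hrel : ∀ t, (deriv v t) ^ 2 = (1 - (v t) ^ 2) ^ 2 / 2 := by
    intro t; rw [hdvsq t, hE0]; ring
  have hdv0 : (deriv v 0) ^ 2 = 1 / 2 := by
    have := hrel 0; rw [hv0] at this; norm_num at this; exact this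
  set σ : ℝ := Real.sqrt 2 * deriv v 0 with hσdef
  have hσsq : σ ^ 2 = 1 := by
    rw [hσdef, mul_pow, Real.sq_sqrt (by norm_num : (0:ℝ) ≤ 2), hdv0]; norm_num
  have hσcases : σ = 1 ∨ σ = -1 := by
    have h : (σ - 1) * (σ + 1) = 0 := by linear_combination hσsq
    rcases mul_eq_zero.mp h with h | h
    · left; linarith
    · right; linarith
  have hσabs : |σ| = 1 := by rcases hσcases with h | h <;> simp [h]
  have hσne : σ ≠ 0 := by rcases hσcases with h | h <;> simp [h]
  have hσderiv : deriv v 0 = σ / Real.sqrt 2 := by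
    rw [hσdef]; field_simp
  -- the comparison solution
  set u : ℝ → ℝ := fun t => Real.tanh (σ * t / Real.sqrt 2) with hudef
  have hu' : ∀ t, HasDerivAt u (σ * (1 - u t ^ 2) / Real.sqrt 2) t := by
    intro t
    have h := (tanh_hasDerivAt (σ * t / Real.sqrt 2)).comp t
      (((hasDerivAt_id t).const_mul σ).div_const (Real.sqrt 2))
    refine h.congr_deriv (Eq.symm ?_)
    simp [hudef]
    ring
  have hucont : Continuous u :=
    Differentiable.continuous fun t => (hu' t).differentiableAt
  have hub1 : ∀ t, u t < 1 := fun t => tanh_lt_one' _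
  have hub2 : ∀ t, -1 < u t := fun t => neg_one_lt_tanh' _
  -- the clopen set where v agrees with u and has the right derivative
  set A : Set ℝ := {t | v t = u t ∧ deriv v t = σ * (1 - (v t) ^ 2) / Real.sqrt 2}
    with hAdef
  have hclosed : IsClosed A := by
    apply IsClosed.inter
    · exact isClosed_eq hcv hucont
    · exact isClosed_eq hcv'
        ((continuous_const.mul (continuous_const.sub (hcv.pow 2))).div_const _)
  have h0A : (0 : ℝ) ∈ A := by
    constructor
    · rw [hv0, hudef]; simp
    · rw [hv0, hσderiv]; norm_num
  have hopen : IsOpen A := by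
    rw [isOpen_iff_mem_nhds]
    rintro t₀ ⟨hA1, hA2⟩
    have hvt₀ : (v t₀) ^ 2 < 1 := by
      rw [hA1]
      nlinarith [hub1 t₀, hub2 t₀]
    obtain ⟨r, hr, hball⟩ : ∃ r > 0,
        Set.Ioo (t₀ - r) (t₀ + r) ⊆ {t | (v t) ^ 2 < 1} := by
      have hU : IsOpen {t : ℝ | (v t) ^ 2 < 1} := isOpen_lt (hcv.pow 2) continuous_const
      obtain ⟨ε, hε, hb⟩ := Metric.isOpen_iff.mp hU t₀ hvt₀
      exact ⟨ε, hε, by rw [← Real.ball_eq_Ioo]; exact hb⟩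
    have ht₀mem : t₀ ∈ Set.Ioo (t₀ - r) (t₀ + r) := by constructor <;> linarith
    have hsubIoo : Set.OrdConnected (Set.Ioo (t₀ - r) (t₀ + r)) := Set.ordConnected_Ioo
    -- derivative has constant sign on the interval
    have hsign : ∀ t ∈ Set.Ioo (t₀ - r) (t₀ + r), 0 < σ * deriv v t := by
      intro t ht
      by_contra hle
      push_neg at hle
      have hpos : 0 < σ * deriv v t₀ := by
        have key : σ * deriv v t₀ = (1 - (v t₀) ^ 2) / Real.sqrt 2 := by
          rw [hA2, show σ * (σ * (1 - (v t₀) ^ 2) / Real.sqrt 2)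
            = σ ^ 2 * ((1 - (v t₀) ^ 2) / Real.sqrt 2) by ring, hσsq, one_mul]
        rw [key]
        apply div_pos (by nlinarith) sqrt2_pos
      have hcont : ContinuousOn (fun s => σ * deriv v s) (Set.uIcc t t₀) :=
        (continuous_const.mul hcv').continuousOn
      have h0mem : (0 : ℝ) ∈ Set.uIcc (σ * deriv v t) (σ * deriv v t₀) :=
        Set.mem_uIcc.mpr (Or.inl ⟨hle, hpos.le⟩)
      obtain ⟨s, hsmem, hfs⟩ := intermediate_value_uIcc hcont h0mem
      have hsIoo : s ∈ Set.Ioo (t₀ - r) (t₀ + r) :=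
        hsubIoo.uIcc_subset ht ht₀mem hsmem
      have hds : deriv v s = 0 := by
        rcases mul_eq_zero.mp hfs with h | h
        · exact absurd h hσne
        · exact h
      have := hrel s
      rw [hds] at this
      have hvs := hball hsIoo
      simp only [Set.mem_setOf_eq] at hvs
      nlinarith
    -- hence the first-order ODE holds on the interval
    have hdvt : ∀ t ∈ Set.Ioo (t₀ - r) (t₀ + r),
        deriv v t = σ * (1 - (v t) ^ 2) / Real.sqrt 2 := by
      intro t ht
      have h1 := hsign t ht
      have h2 := hrel t
      have h3 := hball ht
      simp only [Set.mem_setOf_eq] at h3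
      have h4 : (σ * deriv v t) ^ 2 = ((1 - (v t) ^ 2) / Real.sqrt 2) ^ 2 := by
        rw [mul_pow, hσsq, one_mul, h2, div_pow,
          Real.sq_sqrt (by norm_num : (0:ℝ) ≤ 2)]
      have h5 : 0 < (1 - (v t) ^ 2) / Real.sqrt 2 :=
        div_pos (by nlinarith) sqrt2_pos
      have h6 : (σ * deriv v t - (1 - (v t) ^ 2) / Real.sqrt 2)
          * (σ * deriv v t + (1 - (v t) ^ 2) / Real.sqrt 2) = 0 := by
        linear_combination h4
      have h7 : σ * deriv v t = (1 - (v t) ^ 2) / Real.sqrt 2 := by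
        rcases mul_eq_zero.mp h6 with h | h
        · linarith
        · linarith
      have h8 : σ * (σ * deriv v t) = σ * ((1 - (v t) ^ 2) / Real.sqrt 2) := by
        rw [h7]
      calc deriv v t = σ ^ 2 * deriv v t := by rw [hσsq]; ring
      _ = σ * ((1 - (v t) ^ 2) / Real.sqrt 2) := by rw [← h8]; ring
      _ = σ * (1 - (v t) ^ 2) / Real.sqrt 2 := by ring
    -- Gronwall-type argument: W = (v - u)² vanishes on the interval
    set W : ℝ → ℝ := fun s => (v s - u s) ^ 2 with hWdef
    set W' : ℝ → ℝ := fun s =>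
      2 * (v s - u s) * (deriv v s - σ * (1 - u s ^ 2) / Real.sqrt 2) with hW'def
    have hWd : ∀ s, HasDerivAt W (W' s) s := by
      intro s
      have h := ((hd1 s).hasDerivAt.sub (hu' s)).pow 2
      refine h.congr_deriv (Eq.symm ?_)
      rw [hW'def]
      simp only [Pi.sub_apply]
      ring
    have hbound : ∀ s ∈ Set.Ioo (t₀ - r) (t₀ + r),
        |W' s| ≤ (2 * Real.sqrt 2) * W s := by
      intro s hs
      have hdv := hdvt s hs
      have hvs := hball hs
      simp only [Set.mem_setOf_eq] at hvs
      have h1 : W' s = -(Real.sqrt 2 * σ * (v s + u s)) * W s := by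
        simp only [hW'def, hWdef]
        rw [hdv]
        have hne : Real.sqrt 2 ≠ 0 := sqrt2_pos.ne'
        field_simp
        linear_combination (-(Real.sqrt 2) * (v s * u s ^ 2 * deriv v 0
          + v s ^ 2 * u s * deriv v 0 - v s ^ 3 * deriv v 0
          - u s ^ 3 * deriv v 0) + (Real.sqrt 2 * deriv v 0 - 1) * (v s * u s ^ 2
          + v s ^ 2 * u s - v s ^ 3 - u s ^ 3)) * hsq2
      rw [h1, abs_mul, abs_neg, abs_mul, abs_mul, hσabs,
        abs_of_nonneg (sq_nonneg (v s - u s) : (0:ℝ) ≤ W s),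
        abs_of_nonneg sqrt2_pos.le]
      have hv1 : |v s| ≤ 1 := by
        rw [abs_le]; constructor <;> nlinarith
      have hu1 : |u s| ≤ 1 := by
        rw [abs_le]; constructor
        · linarith [hub2 s]
        · linarith [hub1 s]
      have hvu : |v s + u s| ≤ 2 := by
        calc |v s + u s| ≤ |v s| + |u s| := abs_add_le _ _
        _ ≤ 2 := by linarith
      have hW0 : (0:ℝ) ≤ W s := sq_nonneg _
      calc Real.sqrt 2 * 1 * |v s + u s| * W s
          ≤ Real.sqrt 2 * 1 * 2 * W s := by
            apply mul_le_mul_of_nonneg_right _ hW0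
            nlinarith [sqrt2_pos]
      _ = (2 * Real.sqrt 2) * W s := by ring
    have hWzero := zero_of_self_bound ht₀mem (fun s _ => hWd s)
      (fun s _ => sq_nonneg _) hbound (by rw [hWdef]; simp [hA1])
    -- conclude the interval is inside A
    apply mem_nhds_iff.mpr
    refine ⟨Set.Ioo (t₀ - r) (t₀ + r), ?_, isOpen_Ioo, ht₀mem⟩
    intro t ht
    have hW0 : W t = 0 := hWzero t ht
    have hvu : v t = u t := by
      have : (v t - u t) ^ 2 = 0 := hW0
      have := sq_eq_zero_iff.mp this
      linarith
    exact ⟨hvu, hdvt t ht⟩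
  -- conclude by connectedness of ℝ
  have hAuniv : A = Set.univ := IsClopen.eq_univ ⟨hclosed, hopen⟩ ⟨0, h0A⟩
  have hvu : ∀ t, v t = u t := by
    intro t
    have : t ∈ A := hAuniv ▸ Set.mem_univ t
    exact this.1
  rcases hσcases with hσ1 | hσ1
  · funext t
    rw [hvu t, hudef, hσ1, u₁]
    norm_num
  · exfalso
    have hneg : Tendsto v atTop (nhds (-1)) := by
      have h : Tendsto (fun t => -Real.tanh (t / Real.sqrt 2)) atTop (nhds (-1)) :=
        (tendsto_tanh_atTop.comp hdivTop).neg
      apply h.congr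
      intro t
      rw [hvu t, hudef, hσ1]
      simp [Real.tanh_neg, neg_div]
    have := tendsto_nhds_unique htop hneg
    norm_num at this
end

section
/- Let n ≥ 1 and let u₁(t) = tanh(t/√2). Suppose w : ℝⁿ × ℝ → ℝ is smooth, bounded, satisfies Δ_y w + ∂_t² w + (1 - 3 u₁(t)²) w = 0 on ℝⁿ × ℝ, and satisfies the orthogonality condition ∫_ℝ w(y,t) u₁'(t) dt = 0 for every y ∈ ℝⁿ. Then for every σ ∈ (0, √2) there exists a constant C > 0 such that |w(y,t)| ≤ C e^{-σ|t|} for all (y,t) ∈ ℝⁿ × ℝ. -/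
set_option maxHeartbeats 1000000

open MeasureTheory

/-- Second directional derivative of `f` at `x` in the direction `v`. -/
noncomputable def D2 {E : Type*} [NormedAddCommGroup E] [NormedSpace ℝ E]
    (f : E → ℝ) (x v : E) : ℝ :=
  fderiv ℝ (fun y => fderiv ℝ f y v) x v

section Helpers

variable {F G : Type*} [NormedAddCommGroup F] [NormedSpace ℝ F]
  [NormedAddCommGroup G] [NormedSpace ℝ G]

lemma hasFDerivAt_expTerm (a b : ℝ) (L : F →L[ℝ] ℝ) (x : F) :
    HasFDerivAt (fun x => a * Real.exp (b * L x))
      ((a * b * Real.exp (b * L x)) • (L : F →L[ℝ] ℝ)) x := by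
  have hc : HasFDerivAt (fun x : F => b * L x) (b • (L : F →L[ℝ] ℝ)) x := by
    exact (L.hasFDerivAt (x := x)).const_mul b
  have he := (Real.hasDerivAt_exp (b * L x)).comp_hasFDerivAt x hc
  have := he.const_mul a
  refine this.congr_fderiv ?_
  ext u
  simp [mul_comm, mul_assoc, mul_left_comm]

lemma contDiff_expTerm (a b : ℝ) (L : F →L[ℝ] ℝ) :
    ContDiff ℝ 2 (fun x => a * Real.exp (b * L x)) :=
  contDiff_const.mul (Real.contDiff_exp.comp (contDiff_const.mul L.contDiff))

lemma D2_expTerm (a b : ℝ) (L : F →L[ℝ] ℝ) (p u : F) :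
    D2 (fun x => a * Real.exp (b * L x)) p u
      = a * b ^ 2 * Real.exp (b * L p) * (L u) ^ 2 := by
  have h1 : (fun x => fderiv ℝ (fun x => a * Real.exp (b * L x)) x u)
      = fun x => (a * b * Real.exp (b * L x)) * L u := by
    funext x
    rw [(hasFDerivAt_expTerm a b L x).fderiv]
    simp
  have h2 : HasFDerivAt (fun x => (a * b * Real.exp (b * L x)) * L u)
      (((a * b * b * Real.exp (b * L p)) * L u) • (L : F →L[ℝ] ℝ)) p := by
    have := (hasFDerivAt_expTerm (a * b) b L p).mul_const (L u)
    refine this.congr_fderiv ?_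
    ext v
    simp [mul_comm, mul_assoc, mul_left_comm]
  rw [D2, h1, h2.fderiv]
  simp; ring

lemma differentiable_fderiv_apply (f : F → ℝ) (hf : ContDiff ℝ 2 f) (u : F) :
    Differentiable ℝ (fun x => fderiv ℝ f x u) := by
  have h1 : ContDiff ℝ 1 (fderiv ℝ f) := hf.fderiv_right (by norm_num)
  exact (h1.clm_apply contDiff_const).differentiable one_ne_zero

lemma D2_add (f g : F → ℝ) (hf : ContDiff ℝ 2 f) (hg : ContDiff ℝ 2 g) (p u : F) :
    D2 (fun x => f x + g x) p u = D2 f p u + D2 g p u := by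
  have hfd := hf.differentiable (by norm_num)
  have hgd := hg.differentiable (by norm_num)
  have h1 : (fun x => fderiv ℝ (fun x => f x + g x) x u)
      = fun x => fderiv ℝ f x u + fderiv ℝ g x u := by
    funext x
    rw [fderiv_fun_add (hfd x) (hgd x)]
    simp
  rw [D2, h1, fderiv_fun_add ((differentiable_fderiv_apply f hf u) p)
    ((differentiable_fderiv_apply g hg u) p)]
  simp [D2]

lemma D2_sub (f g : F → ℝ) (hf : ContDiff ℝ 2 f) (hg : ContDiff ℝ 2 g) (p u : F) :
    D2 (fun x => f x - g x) p u = D2 f p u - D2 g p u := by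
  have hfd := hf.differentiable (by norm_num)
  have hgd := hg.differentiable (by norm_num)
  have h1 : (fun x => fderiv ℝ (fun x => f x - g x) x u)
      = fun x => fderiv ℝ f x u - fderiv ℝ g x u := by
    funext x
    rw [fderiv_fun_sub (hfd x) (hgd x)]
    simp
  rw [D2, h1, fderiv_fun_sub ((differentiable_fderiv_apply f hf u) p)
    ((differentiable_fderiv_apply g hg u) p)]
  simp [D2]

lemma D2_neg (f : F → ℝ) (p u : F) :
    D2 (fun x => -f x) p u = -D2 f p u := by
  have h1 : (fun x => fderiv ℝ (fun x => -f x) x u)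
      = fun x => -(fderiv ℝ f x u) := by
    funext x
    rw [fderiv_fun_neg]
    simp
  rw [D2, h1]
  have : (fun x => -(fderiv ℝ f x u)) = fun x => -(fun y => fderiv ℝ f y u) x := rfl
  rw [this, fderiv_fun_neg]
  simp [D2]

lemma D2_sum {ι : Type*} (s : Finset ι) (f : ι → F → ℝ)
    (hf : ∀ i, ContDiff ℝ 2 (f i)) (p u : F) :
    D2 (fun x => ∑ i ∈ s, f i x) p u = ∑ i ∈ s, D2 (f i) p u := by
  classical
  induction s using Finset.induction with
  | empty => simp [D2, fderiv_const]
  | insert _ _ hi ih =>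
      rename_i a s
      simp only [Finset.sum_insert hi]
      rw [D2_add _ _ (hf a) (ContDiff.sum fun i _ => hf i) p u, ih]

lemma D2_comp_clm (f : G → ℝ) (hf : ContDiff ℝ 2 f) (L : F →L[ℝ] G) (p u : F) :
    D2 (fun x => f (L x)) p u = D2 f (L p) (L u) := by
  have hfd := hf.differentiable (by norm_num)
  have h1 : ∀ x, HasFDerivAt (fun x => f (L x)) ((fderiv ℝ f (L x)).comp L) x := by
    intro x
    exact ((hfd (L x)).hasFDerivAt).comp x (L.hasFDerivAt)
  have h2 : (fun x => fderiv ℝ (fun x => f (L x)) x u)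
      = fun x => (fun z => fderiv ℝ f z (L u)) (L x) := by
    funext x
    rw [(h1 x).fderiv]
    rfl
  have h3 : Differentiable ℝ (fun z => fderiv ℝ f z (L u)) :=
    differentiable_fderiv_apply f hf (L u)
  rw [D2, h2]
  have h4 : HasFDerivAt (fun x => (fun z => fderiv ℝ f z (L u)) (L x))
      ((fderiv ℝ (fun z => fderiv ℝ f z (L u)) (L p)).comp L) p :=
    ((h3 (L p)).hasFDerivAt).comp p (L.hasFDerivAt)
  rw [h4.fderiv]
  rfl

lemma D2_nonpos_of_isLocalMax (f : F → ℝ) (hf : ContDiff ℝ 2 f) (a u : F)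
    (h : IsLocalMax f a) : D2 f a u ≤ 0 := by
  by_contra hK
  push_neg at hK
  set K := D2 f a u with hKdef
  set c : ℝ → F := fun s => a + s • u with hc
  have hcd : ∀ s : ℝ, HasDerivAt c u s := by
    intro s
    simpa [hc] using ((hasDerivAt_id s).smul_const u).const_add a
  set h1 : ℝ → ℝ := fun s => fderiv ℝ f (c s) u with hh1
  have hfd := hf.differentiable (by norm_num)
  have hder : ∀ s : ℝ, HasDerivAt (f ∘ c) (h1 s) s := by
    intro s
    exact ((hfd (c s)).hasFDerivAt).comp_hasDerivAt s (hcd s)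
  have hd2 : Differentiable ℝ (fun x => fderiv ℝ f x u) := by
    have h2 : ContDiff ℝ 1 (fderiv ℝ f) := hf.fderiv_right (by norm_num)
    exact (h2.clm_apply contDiff_const).differentiable one_ne_zero
  have hder2 : HasDerivAt h1 K 0 := by
    have := ((hd2 (c 0)).hasFDerivAt).comp_hasDerivAt 0 (hcd 0)
    rw [show c 0 = a by simp [hc]] at this
    exact this
  have hca : c 0 = a := by simp [hc]
  have hmax : IsLocalMax (f ∘ c) 0 := by
    refine IsLocalMax.comp_continuous ?_ (hcd 0).continuousAt
    rwa [hca]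
  have h10 : h1 0 = 0 := by
    have := hmax.deriv_eq_zero
    rwa [(hder 0).deriv] at this
  have hslope : Filter.Tendsto (fun s : ℝ => h1 s / s) (nhdsWithin 0 {0}ᶜ) (nhds K) := by
    have h4 := hasDerivAt_iff_tendsto_slope.mp hder2
    have h4' : slope h1 0 = fun s => h1 s / s := by
      funext s
      rw [slope_def_field, h10]
      ring
    rwa [h4'] at h4
  have hpos : ∀ᶠ s in nhdsWithin (0:ℝ) (Set.Ioi 0), 0 < h1 s := by
    have h5 : ∀ᶠ s in nhdsWithin (0:ℝ) {0}ᶜ, 0 < h1 s / s := by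
      filter_upwards [hslope.eventually (eventually_gt_nhds hK)] with s hs using hs
    have h6 : nhdsWithin (0:ℝ) (Set.Ioi 0) ≤ nhdsWithin 0 {0}ᶜ :=
      nhdsWithin_mono 0 (fun s hs => ne_of_gt hs)
    filter_upwards [h5.filter_mono h6, self_mem_nhdsWithin] with s hs hs0
    have hs' : (0:ℝ) < s := hs0
    have h7 := mul_pos hs hs'
    rwa [div_mul_cancel₀ _ (ne_of_gt hs')] at h7
  obtain ⟨δ, hδ0, hδ⟩ := mem_nhdsGT_iff_exists_Ioo_subset.mp hpos
  obtain ⟨ε, hε0, hε⟩ := Metric.eventually_nhds_iff.mp hmax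
  set s₁ : ℝ := min δ ε / 2 with hs₁
  have hs₁0 : 0 < s₁ := by
    rw [hs₁]
    have := lt_min hδ0 hε0
    linarith
  have hs₁δ : s₁ < δ := by
    have h7 := min_le_left δ ε
    rw [hs₁]; linarith
  have hs₁ε : |s₁ - 0| < ε := by
    have h7 := min_le_right δ ε
    rw [sub_zero, abs_of_pos hs₁0, hs₁]; linarith
  -- MVT on [0, s₁]
  obtain ⟨x, hx, hxslope⟩ := exists_hasDerivAt_eq_slope (f ∘ c) h1 hs₁0
    (fun s _ => (hder s).continuousAt.continuousWithinAt)
    (fun s _ => hder s)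
  have hxpos : 0 < h1 x := hδ ⟨hx.1, lt_trans hx.2 hs₁δ⟩
  have hle : (f ∘ c) s₁ ≤ (f ∘ c) 0 := hε hs₁ε
  rw [hxslope] at hxpos
  have : 0 < (f ∘ c) s₁ - (f ∘ c) 0 := by
    have h8 : (0:ℝ) < s₁ - 0 := by linarith
    have := (div_pos_iff).mp hxpos
    rcases this with ⟨h9, _⟩ | ⟨_, h10⟩
    · linarith
    · linarith
  linarith

lemma tanh_lower (r : ℝ) (hr0 : 0 ≤ r) (hr1 : r < 1) (x : ℝ)
    (hx : Real.log ((1 + r) / (1 - r)) ≤ x) : r ≤ Real.tanh x := by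
  have hc0 : 0 < (1 + r) / (1 - r) := div_pos (by linarith) (by linarith)
  have hc1 : (1:ℝ) ≤ (1 + r) / (1 - r) := by
    rw [le_div_iff₀ (by linarith)]
    linarith
  have hx0 : 0 ≤ x := le_trans (Real.log_nonneg hc1) hx
  have h1 : Real.exp (-x) ≤ 1 := Real.exp_le_one_iff.mpr (by linarith)
  have h2 : (1 + r) / (1 - r) ≤ Real.exp x := by
    calc (1 + r) / (1 - r) = Real.exp (Real.log ((1 + r) / (1 - r))) :=
          (Real.exp_log hc0).symm
    _ ≤ Real.exp x := Real.exp_le_exp.mpr hx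
  have h2' : 1 + r ≤ Real.exp x * (1 - r) := by
    rwa [div_le_iff₀ (by linarith)] at h2
  have h3 : 0 < Real.exp x + Real.exp (-x) := by positivity
  rw [Real.tanh_eq_sinh_div_cosh, Real.sinh_eq, Real.cosh_eq]
  have h4 : (Real.exp x - Real.exp (-x)) / 2 / ((Real.exp x + Real.exp (-x)) / 2)
      = (Real.exp x - Real.exp (-x)) / (Real.exp x + Real.exp (-x)) := by
    field_simp
  rw [h4, le_div_iff₀ h3]
  have h5 : Real.exp (-x) * (1 + r) ≤ 1 + r :=
    mul_le_of_le_one_left (by linarith) h1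
  nlinarith

lemma D2_neg_dir {F : Type*} [NormedAddCommGroup F] [NormedSpace ℝ F]
    (f : F → ℝ) (x u : F) : D2 f x (-u) = D2 f x u := by
  have h1 : (fun y => fderiv ℝ f y (-u)) = fun y => -(fun z => fderiv ℝ f z u) y := by
    funext y
    simp
  rw [D2, h1, fderiv_fun_neg]
  simp [D2]

end Helpers

open Real in
lemma halfspace (n : ℕ) (σ σ' T M : ℝ) (q : ℝ → ℝ) (hσ : 0 < σ) (hσσ' : σ < σ')
    (hT : 0 ≤ T) (hM : 0 ≤ M)
    (v : EuclideanSpace ℝ (Fin n) × ℝ → ℝ) (hv : ContDiff ℝ 2 v)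
    (hvb : ∀ p, v p ≤ M)
    (heq : ∀ p : EuclideanSpace ℝ (Fin n) × ℝ, T ≤ p.2 →
      (∑ i, D2 v p (EuclideanSpace.single i 1, 0)) + D2 v p (0, 1) = q p.2 * v p)
    (hq : ∀ t, T ≤ t → σ' ^ 2 ≤ q t) :
    ∀ p : EuclideanSpace ℝ (Fin n) × ℝ, T ≤ p.2 →
      v p ≤ (M * Real.exp (σ * T)) * Real.exp (-σ * p.2) := by
  classical
  set A : ℝ := M * Real.exp (σ * T) with hA
  have hA0 : 0 ≤ A := by positivity
  set Lt : (EuclideanSpace ℝ (Fin n) × ℝ) →L[ℝ] ℝ := ContinuousLinearMap.snd ℝ (EuclideanSpace ℝ (Fin n)) ℝ with hLt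
  set Lc : Fin n → (EuclideanSpace ℝ (Fin n) × ℝ) →L[ℝ] ℝ :=
    fun i => (EuclideanSpace.proj i).comp (ContinuousLinearMap.fst ℝ (EuclideanSpace ℝ (Fin n)) ℝ) with hLc
  have hLt_app : ∀ p : EuclideanSpace ℝ (Fin n) × ℝ, Lt p = p.2 := fun p => rfl
  have hLc_app : ∀ i (p : EuclideanSpace ℝ (Fin n) × ℝ), Lc i p = p.1 i := fun i p => rfl
  have hLt_dir : ∀ i : Fin n, Lt ((EuclideanSpace.single i 1 : EuclideanSpace ℝ (Fin n)), (0:ℝ)) = 0 := fun i => rfl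
  have hLt_vert : Lt ((0 : EuclideanSpace ℝ (Fin n)), (1:ℝ)) = 1 := rfl
  have hLc_vert : ∀ i, Lc i ((0 : EuclideanSpace ℝ (Fin n)), (1:ℝ)) = 0 := fun i => rfl
  have hLc_dir : ∀ i j : Fin n, Lc j ((EuclideanSpace.single i 1 : EuclideanSpace ℝ (Fin n)), (0:ℝ))
      = if j = i then 1 else 0 := by
    intro i j
    exact EuclideanSpace.single_apply i 1 j
  -- the key estimate for fixed ε
  have key : ∀ ε : ℝ, 0 < ε → ∀ p : EuclideanSpace ℝ (Fin n) × ℝ, T ≤ p.2 →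
      v p ≤ A * Real.exp (-σ * p.2) + ε * (Real.exp (σ * p.2)
        + ∑ i, (Real.exp (σ * p.1 i) + Real.exp (-σ * p.1 i))) := by
    intro ε hε
    -- the barrier
    set Φ : EuclideanSpace ℝ (Fin n) × ℝ → ℝ := fun p => A * Real.exp (-σ * Lt p) + ε * Real.exp (σ * Lt p)
      + ∑ i, (ε * Real.exp (σ * Lc i p) + ε * Real.exp (-σ * Lc i p)) with hΦ
    have hΦterm : ∀ i : Fin n, ContDiff ℝ 2 (fun p : EuclideanSpace ℝ (Fin n) × ℝ =>
        ε * Real.exp (σ * Lc i p) + ε * Real.exp (-σ * Lc i p)) :=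
      fun i => (contDiff_expTerm ε σ (Lc i)).add (contDiff_expTerm ε (-σ) (Lc i))
    have hΦc : ContDiff ℝ 2 Φ := by
      refine ((contDiff_expTerm A (-σ) Lt).add (contDiff_expTerm ε σ Lt)).add ?_
      exact ContDiff.sum fun i _ => hΦterm i
    have hΦpos : ∀ p, 0 < Φ p := by
      intro p
      have h1 : 0 ≤ ∑ i, (ε * Real.exp (σ * Lc i p) + ε * Real.exp (-σ * Lc i p)) :=
        Finset.sum_nonneg fun i _ => by positivity
      have h2 : 0 < ε * Real.exp (σ * Lt p) := by positivity
      have h3 : 0 ≤ A * Real.exp (-σ * Lt p) := by positivity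
      simp only [hΦ]
      linarith
    -- D2 of the barrier in an arbitrary direction
    have hD2Φ : ∀ p u, D2 Φ p u = A * σ^2 * Real.exp (-σ * Lt p) * (Lt u)^2
        + ε * σ^2 * Real.exp (σ * Lt p) * (Lt u)^2
        + ∑ i, (ε * σ^2 * Real.exp (σ * Lc i p) * (Lc i u)^2
            + ε * σ^2 * Real.exp (-σ * Lc i p) * (Lc i u)^2) := by
      intro p u
      rw [hΦ]
      rw [D2_add _ _ ((contDiff_expTerm A (-σ) Lt).add (contDiff_expTerm ε σ Lt))
        (ContDiff.sum fun i _ => hΦterm i),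
        D2_add _ _ (contDiff_expTerm A (-σ) Lt) (contDiff_expTerm ε σ Lt),
        D2_sum _ _ hΦterm, D2_expTerm, D2_expTerm]
      have : ∀ i : Fin n, D2 (fun p : EuclideanSpace ℝ (Fin n) × ℝ =>
          ε * Real.exp (σ * Lc i p) + ε * Real.exp (-σ * Lc i p)) p u
          = ε * σ^2 * Real.exp (σ * Lc i p) * (Lc i u)^2
            + ε * σ^2 * Real.exp (-σ * Lc i p) * (Lc i u)^2 := by
        intro i
        rw [D2_add _ _ (contDiff_expTerm ε σ (Lc i)) (contDiff_expTerm ε (-σ) (Lc i)),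
          D2_expTerm, D2_expTerm]
        ring
      rw [Finset.sum_congr rfl fun i _ => this i]
      ring
    -- Laplacian of the barrier
    have hΔΦ : ∀ p : EuclideanSpace ℝ (Fin n) × ℝ, (∑ i, D2 Φ p (EuclideanSpace.single i 1, 0))
        + D2 Φ p (0, 1) = σ^2 * Φ p := by
      intro p
      have h1 : ∀ i : Fin n, D2 Φ p (EuclideanSpace.single i 1, 0)
          = ε * σ^2 * Real.exp (σ * Lc i p) + ε * σ^2 * Real.exp (-σ * Lc i p) := by
        intro i
        rw [hD2Φ, hLt_dir]
        have h2 : ∀ j : Fin n, ε * σ^2 * Real.exp (σ * Lc j p)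
            * (Lc j ((EuclideanSpace.single i 1 : EuclideanSpace ℝ (Fin n)), (0:ℝ)))^2
            + ε * σ^2 * Real.exp (-σ * Lc j p)
            * (Lc j ((EuclideanSpace.single i 1 : EuclideanSpace ℝ (Fin n)), (0:ℝ)))^2
            = if j = i then ε * σ^2 * Real.exp (σ * Lc j p)
              + ε * σ^2 * Real.exp (-σ * Lc j p) else 0 := by
          intro j
          rw [hLc_dir]
          by_cases h : j = i <;> simp [h]
        rw [Finset.sum_congr rfl fun j _ => h2 j, Finset.sum_ite_eq']
        simp
      have h3 : D2 Φ p (0, 1) = A * σ^2 * Real.exp (-σ * Lt p)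
          + ε * σ^2 * Real.exp (σ * Lt p) := by
        rw [hD2Φ, hLt_vert]
        have : ∀ j : Fin n, ε * σ^2 * Real.exp (σ * Lc j p)
            * (Lc j ((0:EuclideanSpace ℝ (Fin n)), (1:ℝ)))^2 + ε * σ^2 * Real.exp (-σ * Lc j p)
            * (Lc j ((0:EuclideanSpace ℝ (Fin n)), (1:ℝ)))^2 = 0 := by
          intro j
          rw [hLc_vert]
          ring
        rw [Finset.sum_congr rfl fun j _ => this j]
        simp
      rw [Finset.sum_congr rfl fun i _ => h1 i, h3]
      have hsum : (∑ i, (ε * σ^2 * Real.exp (σ * Lc i p) + ε * σ^2 * Real.exp (-σ * Lc i p)))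
          = σ^2 * ∑ i, (ε * Real.exp (σ * Lc i p) + ε * Real.exp (-σ * Lc i p)) := by
        rw [Finset.mul_sum]
        exact Finset.sum_congr rfl fun i _ => by ring
      simp only [hΦ]
      rw [hsum]
      ring
    -- maximum principle for g = v - Φ
    set g : EuclideanSpace ℝ (Fin n) × ℝ → ℝ := fun p => v p - Φ p with hg
    have hgC2 : ContDiff ℝ 2 g := by rw [hg]; exact hv.sub hΦc
    have hgc : Continuous g := hgC2.continuous
    have hterm_t : ∀ p : EuclideanSpace ℝ (Fin n) × ℝ, ε * Real.exp (σ * p.2) ≤ Φ p := by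
      intro p
      have h1 : 0 ≤ ∑ i, (ε * Real.exp (σ * Lc i p) + ε * Real.exp (-σ * Lc i p)) :=
        Finset.sum_nonneg fun i _ => by positivity
      have h3 : 0 ≤ A * Real.exp (-σ * Lt p) := by positivity
      simp only [hLt_app, hLc_app] at h1 h3 ⊢
      simp only [hΦ, hLt_app, hLc_app]
      linarith
    have hterm_c : ∀ (p : EuclideanSpace ℝ (Fin n) × ℝ) (i : Fin n),
        ε * Real.exp (σ * p.1 i) + ε * Real.exp (-σ * p.1 i) ≤ Φ p := by
      intro p i
      have h1 : ε * Real.exp (σ * Lc i p) + ε * Real.exp (-σ * Lc i p)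
          ≤ ∑ j, (ε * Real.exp (σ * Lc j p) + ε * Real.exp (-σ * Lc j p)) :=
        Finset.single_le_sum
          (f := fun j => ε * Real.exp (σ * Lc j p) + ε * Real.exp (-σ * Lc j p))
          (fun j _ => by positivity) (Finset.mem_univ i)
      have h3 : 0 ≤ A * Real.exp (-σ * Lt p) := by positivity
      have h4 : 0 ≤ ε * Real.exp (σ * Lt p) := by positivity
      simp only [hLt_app, hLc_app] at h1 h3 h4
      simp only [hΦ, hLt_app, hLc_app]
      linarith
    have hclaim : ∀ p : EuclideanSpace ℝ (Fin n) × ℝ, T ≤ p.2 → g p ≤ 0 := by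
      by_contra hcon
      push_neg at hcon
      obtain ⟨p₁, hp₁T, hp₁⟩ := hcon
      set S : Set (EuclideanSpace ℝ (Fin n) × ℝ) := {p | T ≤ p.2 ∧ g p₁ ≤ g p} with hS
      have hp₁S : p₁ ∈ S := ⟨hp₁T, le_refl _⟩
      have hSclosed : IsClosed S :=
        (isClosed_le continuous_const continuous_snd).inter
          (isClosed_le continuous_const hgc)
      have hΦM : ∀ p ∈ S, Φ p ≤ M := by
        intro p hp
        have h1 : 0 < g p := lt_of_lt_of_le hp₁ hp.2
        have h2 := hvb p
        simp only [hg] at h1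
        linarith
      have hM0 : 0 < M := lt_of_lt_of_le (hΦpos p₁) (hΦM p₁ hp₁S)
      have hMε : 0 < M / ε := by positivity
      set B : ℝ := Real.log (M / ε) / σ with hB
      -- B is nonnegative
      have hB0 : 0 ≤ B := by
        have h1 : ε * Real.exp (σ * p₁.2) ≤ M := le_trans (hterm_t p₁) (hΦM p₁ hp₁S)
        have h2 : Real.exp (σ * p₁.2) ≤ M / ε := by
          rw [le_div_iff₀ hε]; linarith [h1, mul_comm ε (Real.exp (σ * p₁.2))]
        have h3 : (1:ℝ) ≤ M / ε := by
          have h4 : (0:ℝ) ≤ σ * p₁.2 := mul_nonneg hσ.le (le_trans hT hp₁T)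
          calc (1:ℝ) = Real.exp 0 := by simp
          _ ≤ Real.exp (σ * p₁.2) := Real.exp_le_exp.mpr h4
          _ ≤ M / ε := h2
        have h5 : 0 ≤ Real.log (M / ε) := Real.log_nonneg h3
        positivity
      have hcoordt : ∀ p ∈ S, p.2 ≤ B := by
        intro p hp
        have h1 : ε * Real.exp (σ * p.2) ≤ M := le_trans (hterm_t p) (hΦM p hp)
        have h2 : Real.exp (σ * p.2) ≤ M / ε := by
          rw [le_div_iff₀ hε]; linarith [mul_comm ε (Real.exp (σ * p.2))]
        have h3 : σ * p.2 ≤ Real.log (M / ε) := (Real.le_log_iff_exp_le hMε).mpr h2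
        rw [hB, le_div_iff₀ hσ]
        linarith [mul_comm σ p.2]
      have hcoordc : ∀ p ∈ S, ∀ i : Fin n, |p.1 i| ≤ B := by
        intro p hp i
        have h0 := le_trans (hterm_c p i) (hΦM p hp)
        have hpos1 : 0 < ε * Real.exp (σ * p.1 i) := by positivity
        have hpos2 : 0 < ε * Real.exp (-σ * p.1 i) := by positivity
        have h1 : Real.exp (σ * p.1 i) ≤ M / ε := by
          rw [le_div_iff₀ hε]; linarith [mul_comm ε (Real.exp (σ * p.1 i))]
        have h2 : Real.exp (-σ * p.1 i) ≤ M / ε := by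
          rw [le_div_iff₀ hε]; linarith [mul_comm ε (Real.exp (-σ * p.1 i))]
        have h3 : σ * p.1 i ≤ Real.log (M / ε) := (Real.le_log_iff_exp_le hMε).mpr h1
        have h4 : -σ * p.1 i ≤ Real.log (M / ε) := (Real.le_log_iff_exp_le hMε).mpr h2
        have h5 : p.1 i ≤ B := by
          rw [hB, le_div_iff₀ hσ]
          linarith [mul_comm σ (p.1 i)]
        have h6 : -B ≤ p.1 i := by
          rw [hB, neg_le, le_div_iff₀ hσ]
          linarith [mul_comm σ (p.1 i)]
        exact abs_le.mpr ⟨h6, h5⟩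
      -- S is bounded
      have hSbounded : Bornology.IsBounded S := by
        rw [Metric.isBounded_iff_subset_closedBall 0]
        refine ⟨max (Real.sqrt n * B) (|T| + B), fun p hp => ?_⟩
        rw [Metric.mem_closedBall, dist_zero_right, Prod.norm_def]
        apply max_le
        · -- Euclidean part
          have h1 : ‖p.1‖ ≤ Real.sqrt n * B := by
            rw [EuclideanSpace.norm_eq]
            have h2 : (∑ i, ‖p.1 i‖ ^ 2) ≤ (n : ℝ) * B ^ 2 := by
              calc (∑ i, ‖p.1 i‖ ^ 2) ≤ ∑ _i : Fin n, B ^ 2 := by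
                    apply Finset.sum_le_sum
                    intro i _
                    have := hcoordc p hp i
                    rw [Real.norm_eq_abs]
                    nlinarith [abs_nonneg (p.1 i)]
                _ = (n : ℝ) * B ^ 2 := by
                    rw [Finset.sum_const, Finset.card_univ, Fintype.card_fin, nsmul_eq_mul]
            calc Real.sqrt (∑ i, ‖p.1 i‖ ^ 2) ≤ Real.sqrt ((n:ℝ) * B ^ 2) :=
                  Real.sqrt_le_sqrt h2
              _ = Real.sqrt n * B := by
                  rw [Real.sqrt_mul (Nat.cast_nonneg n), Real.sqrt_sq hB0]
          exact le_trans h1 (le_max_left _ _)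
        · have h1 : |p.2| ≤ |T| + B := by
            rw [abs_le]
            constructor
            · have := hp.1
              have h2 := neg_abs_le T
              linarith
            · have := hcoordt p hp
              have h2 := abs_nonneg T
              linarith
          rw [Real.norm_eq_abs]
          exact le_trans h1 (le_max_right _ _)
      -- maximum over S
      obtain ⟨p₀, hp₀S, hp₀max⟩ :=
        (Metric.isCompact_of_isClosed_isBounded hSclosed hSbounded).exists_isMaxOn
          ⟨p₁, hp₁S⟩ hgc.continuousOn
      have hgp₀ : 0 < g p₀ := lt_of_lt_of_le hp₁ (hp₀max hp₁S)
      have hglob : ∀ p : EuclideanSpace ℝ (Fin n) × ℝ, T ≤ p.2 → g p ≤ g p₀ := by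
        intro p hp
        by_cases hpS : p ∈ S
        · exact hp₀max hpS
        · have h1 : ¬ (g p₁ ≤ g p) := fun h => hpS ⟨hp, h⟩
          push_neg at h1
          have h2 : g p₁ ≤ g p₀ := hp₀max hp₁S
          linarith
      -- p₀ is in the interior
      have hTp₀ : T < p₀.2 := by
        rcases lt_or_eq_of_le hp₀S.1 with h | h
        · exact h
        · exfalso
          have h1 : A * Real.exp (-σ * p₀.2) = M := by
            rw [← h, hA, mul_assoc, ← Real.exp_add]
            ring_nf
            simp
          have h2 : 0 ≤ ∑ i, (ε * Real.exp (σ * Lc i p₀) + ε * Real.exp (-σ * Lc i p₀)) :=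
            Finset.sum_nonneg fun i _ => by positivity
          have h3 : 0 ≤ ε * Real.exp (σ * Lt p₀) := by positivity
          have h4 : M ≤ Φ p₀ := by
            simp only [hΦ, hLt_app]
            simp only [hLt_app] at h3
            linarith
          have h5 := hvb p₀
          simp only [hg] at hgp₀
          linarith
      have hloc : IsLocalMax g p₀ := by
        have hopen : IsOpen {p : EuclideanSpace ℝ (Fin n) × ℝ | T < p.2} := isOpen_lt continuous_const continuous_snd
        exact Filter.eventually_of_mem (hopen.mem_nhds hTp₀) fun p hp => hglob p (le_of_lt hp)
      have hdirs : ∀ u, D2 g p₀ u ≤ 0 := fun u => D2_nonpos_of_isLocalMax g hgC2 p₀ u hloc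
      have hΔg : (∑ i, D2 g p₀ (EuclideanSpace.single i 1, 0)) + D2 g p₀ (0, 1) ≤ 0 :=
        add_nonpos (Finset.sum_nonpos fun i _ => hdirs _) (hdirs _)
      have hD2g : ∀ u, D2 g p₀ u = D2 v p₀ u - D2 Φ p₀ u := fun u => D2_sub v Φ hv hΦc p₀ u
      rw [Finset.sum_congr rfl (fun i _ => hD2g _), hD2g, Finset.sum_sub_distrib] at hΔg
      have hΔv := heq p₀ hp₀S.1
      have hΔΦ₀ := hΔΦ p₀
      have hqp := hq p₀.2 hp₀S.1
      have hv0 : Φ p₀ < v p₀ := by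
        simp only [hg] at hgp₀
        linarith
      have hvpos : 0 < v p₀ := lt_trans (hΦpos p₀) hv0
      have h6 : σ' ^ 2 * v p₀ ≤ q p₀.2 * v p₀ :=
        mul_le_mul_of_nonneg_right hqp hvpos.le
      have h7 : σ ^ 2 < σ' ^ 2 := by nlinarith
      have h8 : σ ^ 2 * Φ p₀ ≤ σ ^ 2 * v p₀ :=
        mul_le_mul_of_nonneg_left hv0.le (by positivity)
      have h9 : σ ^ 2 * Φ p₀ < σ' ^ 2 * v p₀ :=
        lt_of_le_of_lt h8 (mul_lt_mul_of_pos_right h7 hvpos)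
      linarith [hΔg, hΔv, hΔΦ₀, h6, h9]
    -- conclusion of the ε-estimate
    intro p hpT
    have h1 := hclaim p hpT
    simp only [hg] at h1
    have h2 : Φ p = A * Real.exp (-σ * p.2) + ε * (Real.exp (σ * p.2)
        + ∑ i, (Real.exp (σ * p.1 i) + Real.exp (-σ * p.1 i))) := by
      simp only [hΦ, hLt_app, hLc_app]
      rw [mul_add, Finset.mul_sum]
      have h3 : ∀ i : Fin n, ε * Real.exp (σ * p.1 i) + ε * Real.exp (-σ * p.1 i)
          = ε * (Real.exp (σ * p.1 i) + Real.exp (-σ * p.1 i)) := fun i => by ring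
      rw [Finset.sum_congr rfl fun i _ => h3 i]
      ring
    rw [h2] at h1
    linarith
  -- let ε → 0
  intro p hpT
  set Ep : ℝ := Real.exp (σ * p.2) + ∑ i, (Real.exp (σ * p.1 i) + Real.exp (-σ * p.1 i))
    with hEp
  have hEp0 : 0 < Ep := by
    have h1 : 0 ≤ ∑ i, (Real.exp (σ * p.1 i) + Real.exp (-σ * p.1 i)) :=
      Finset.sum_nonneg fun i _ => by positivity
    have h2 : 0 < Real.exp (σ * p.2) := Real.exp_pos _
    rw [hEp]; linarith
  by_contra hcon
  push_neg at hcon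
  set r : ℝ := v p - A * Real.exp (-σ * p.2) with hr
  have hr0 : 0 < r := by rw [hr]; linarith
  have h1 := key (r / (2 * Ep)) (by positivity) p hpT
  have h2 : r / (2 * Ep) * Ep = r / 2 := by
    field_simp
  rw [← hEp, h2] at h1
  linarith [h1, hr0, hr]

/-- Exponential decay of bounded solutions of `Δ_y w + ∂_t² w + (1 - 3u₁²) w = 0` on
`ℝⁿ × ℝ` which are fiberwise `L²`-orthogonal to `u₁'` (intermediate claim of
Lemma 8.2). -/
theorem exponential_decay_of_orthogonal_kernel (n : ℕ) (hn : 1 ≤ n)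
    (w : EuclideanSpace ℝ (Fin n) × ℝ → ℝ)
    (hw : ContDiff ℝ (⊤ : ℕ∞) w) (hb : ∃ C : ℝ, ∀ p, |w p| ≤ C)
    (heq : ∀ p : EuclideanSpace ℝ (Fin n) × ℝ,
      (∑ i, D2 w p (EuclideanSpace.single i 1, 0)) + D2 w p (0, 1)
        + (1 - 3 * (u₁ p.2) ^ 2) * w p = 0)
    (horth : ∀ y : EuclideanSpace ℝ (Fin n), ∫ t : ℝ, w (y, t) * deriv u₁ t = 0) :
    ∀ σ ∈ Set.Ioo (0 : ℝ) (Real.sqrt 2), ∃ C : ℝ, 0 < C ∧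
      ∀ p : EuclideanSpace ℝ (Fin n) × ℝ, |w p| ≤ C * Real.exp (-σ * |p.2|) := by
  classical
  rintro σ ⟨hσ0, hσ2⟩
  obtain ⟨M, hM⟩ := hb
  have hM0 : 0 ≤ M := le_trans (abs_nonneg _) (hM ((0 : EuclideanSpace ℝ (Fin n)), 0))
  have hw2 : ContDiff ℝ 2 w := hw.of_le (by norm_cast)
  -- parameters
  set σ' : ℝ := (σ + Real.sqrt 2) / 2 with hσ'def
  have hsqrt2 : 0 < Real.sqrt 2 := by positivity
  have hσσ' : σ < σ' := by rw [hσ'def]; linarith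
  have hσ'0 : 0 < σ' := lt_trans hσ0 hσσ'
  have hσ'2 : σ' < Real.sqrt 2 := by rw [hσ'def]; linarith
  have hσ'sq : σ' ^ 2 < 2 := by
    have h1 : σ' ^ 2 < Real.sqrt 2 ^ 2 := by
      apply pow_lt_pow_left₀ hσ'2 hσ'0.le
      norm_num
    rwa [Real.sq_sqrt (by norm_num : (2:ℝ) ≥ 0)] at h1
  set r : ℝ := Real.sqrt ((1 + σ' ^ 2) / 3) with hrdef
  have hr0 : 0 ≤ r := Real.sqrt_nonneg _
  have hr1 : r < 1 := by
    rw [hrdef]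
    nth_rewrite 2 [show (1:ℝ) = Real.sqrt 1 by simp]
    exact Real.sqrt_lt_sqrt (by positivity) (by linarith)
  have hrsq : r ^ 2 = (1 + σ' ^ 2) / 3 := Real.sq_sqrt (by positivity)
  set x₀ : ℝ := Real.log ((1 + r) / (1 - r)) with hx₀def
  have hx₀0 : 0 ≤ x₀ := by
    apply Real.log_nonneg
    rw [le_div_iff₀ (by linarith)]
    linarith
  set T : ℝ := Real.sqrt 2 * x₀ with hTdef
  have hT0 : 0 ≤ T := by positivity
  -- the potential
  set q : ℝ → ℝ := fun t => 3 * (u₁ t) ^ 2 - 1 with hqdef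
  have hq : ∀ t : ℝ, T ≤ |t| → σ' ^ 2 ≤ q t := by
    intro t ht
    have h1 : u₁ t ^ 2 = Real.tanh (|t| / Real.sqrt 2) ^ 2 := by
      rcases abs_cases t with ⟨h, _⟩ | ⟨h, _⟩
      · rw [h, u₁]
      · rw [h, u₁, neg_div, Real.tanh_neg, neg_sq]
    have h2 : x₀ ≤ |t| / Real.sqrt 2 := by
      rw [le_div_iff₀ hsqrt2]
      calc x₀ * Real.sqrt 2 = T := by rw [hTdef]; ring
      _ ≤ |t| := ht
    have h3 : r ≤ Real.tanh (|t| / Real.sqrt 2) := tanh_lower r hr0 hr1 _ (by rwa [← hx₀def])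
    have h4 : r ^ 2 ≤ Real.tanh (|t| / Real.sqrt 2) ^ 2 := by
      apply pow_le_pow_left₀ hr0 h3
    rw [hqdef]
    simp only
    rw [h1] at *
    rw [hrsq] at h4
    linarith
  -- the equation in "Laplacian = potential" form
  have heq' : ∀ p : EuclideanSpace ℝ (Fin n) × ℝ,
      (∑ i, D2 w p (EuclideanSpace.single i 1, 0)) + D2 w p (0, 1) = q p.2 * w p := by
    intro p
    have h := heq p
    rw [hqdef]
    simp only
    linarith
  -- reflection map
  set R : (EuclideanSpace ℝ (Fin n) × ℝ) →L[ℝ] (EuclideanSpace ℝ (Fin n) × ℝ) :=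
    (ContinuousLinearMap.fst ℝ (EuclideanSpace ℝ (Fin n)) ℝ).prod
      (-(ContinuousLinearMap.snd ℝ (EuclideanSpace ℝ (Fin n)) ℝ)) with hRdef
  have hR_app : ∀ p : EuclideanSpace ℝ (Fin n) × ℝ, R p = (p.1, -p.2) := fun p => rfl
  have hR_dir : ∀ i : Fin n, R ((EuclideanSpace.single i 1 : EuclideanSpace ℝ (Fin n)), (0:ℝ))
      = ((EuclideanSpace.single i 1 : EuclideanSpace ℝ (Fin n)), (0:ℝ)) := by
    intro i
    rw [hR_app]
    simp
  have hR_vert : R ((0 : EuclideanSpace ℝ (Fin n)), (1:ℝ))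
      = -((0 : EuclideanSpace ℝ (Fin n)), (1:ℝ)) := by
    rw [hR_app]
    simp [Prod.neg_mk]
  -- the four applications of the half-space estimate
  set A : ℝ := M * Real.exp (σ * T) with hAdef
  -- (1) w itself
  have h1 := halfspace n σ σ' T M q hσ0 hσσ' hT0 hM0 w hw2
    (fun p => le_trans (le_abs_self _) (hM p)) (fun p _ => heq' p)
    (fun t ht => hq t (by rwa [abs_of_nonneg (le_trans hT0 ht)]))
  -- (2) -w
  have heqneg : ∀ p : EuclideanSpace ℝ (Fin n) × ℝ,
      (∑ i, D2 (fun x => -w x) p (EuclideanSpace.single i 1, 0))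
        + D2 (fun x => -w x) p (0, 1) = q p.2 * (fun x => -w x) p := by
    intro p
    rw [Finset.sum_congr rfl fun i _ => D2_neg w p _, D2_neg w p _]
    simp only
    rw [Finset.sum_neg_distrib]
    have := heq' p
    ring_nf
    ring_nf at this
    linarith
  have h2 := halfspace n σ σ' T M q hσ0 hσσ' hT0 hM0 (fun x => -w x) hw2.neg
    (fun p => le_trans (neg_le_abs _) (hM p)) (fun p _ => heqneg p)
    (fun t ht => hq t (by rwa [abs_of_nonneg (le_trans hT0 ht)]))
  -- (3) w reflected
  have heqrefl : ∀ p : EuclideanSpace ℝ (Fin n) × ℝ,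
      (∑ i, D2 (fun x => w (R x)) p (EuclideanSpace.single i 1, 0))
        + D2 (fun x => w (R x)) p (0, 1) = q (-p.2) * (fun x => w (R x)) p := by
    intro p
    rw [Finset.sum_congr rfl fun i _ => by
        rw [D2_comp_clm w hw2 R p _, hR_dir _],
      D2_comp_clm w hw2 R p _, hR_vert, D2_neg_dir]
    have h := heq' (R p)
    rw [hR_app] at h
    simpa [hR_app] using h
  have hqrefl : ∀ t, T ≤ t → σ' ^ 2 ≤ q (-t) := by
    intro t ht
    apply hq
    rw [abs_neg, abs_of_nonneg (le_trans hT0 ht)]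
    exact ht
  have h3 := halfspace n σ σ' T M (fun t => q (-t)) hσ0 hσσ' hT0 hM0
    (fun x => w (R x)) (hw2.comp R.contDiff)
    (fun p => le_trans (le_abs_self _) (hM _)) (fun p _ => heqrefl p) hqrefl
  -- (4) -w reflected
  have heqreflneg : ∀ p : EuclideanSpace ℝ (Fin n) × ℝ,
      (∑ i, D2 (fun x => -w (R x)) p (EuclideanSpace.single i 1, 0))
        + D2 (fun x => -w (R x)) p (0, 1) = q (-p.2) * (fun x => -w (R x)) p := by
    intro p
    rw [Finset.sum_congr rfl fun i _ => D2_neg (fun x => w (R x)) p _,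
      D2_neg (fun x => w (R x)) p _, Finset.sum_neg_distrib]
    have := heqrefl p
    simp only at this ⊢
    linarith
  have h4 := halfspace n σ σ' T M (fun t => q (-t)) hσ0 hσσ' hT0 hM0
    (fun x => -w (R x)) ((hw2.comp R.contDiff).neg)
    (fun p => le_trans (neg_le_abs _) (hM _)) (fun p _ => heqreflneg p) hqrefl
  -- assemble
  refine ⟨A + 1, by positivity, ?_⟩
  intro p
  have hexp : 0 < Real.exp (-σ * |p.2|) := Real.exp_pos _
  have hmain : |w p| ≤ A * Real.exp (-σ * |p.2|) := by
    rcases le_total T |p.2| with hcase | hcase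
    · rcases abs_cases p.2 with ⟨habs, hsgn⟩ | ⟨habs, hsgn⟩
      · -- p.2 ≥ 0, so T ≤ p.2
        have hp : T ≤ p.2 := by rw [← habs]; exact hcase
        have ha := h1 p hp
        have hb' := h2 p hp
        rw [abs_le, habs, hAdef]
        constructor <;> linarith
      · -- p.2 < 0 branch : use reflected versions at (p.1, -p.2)
        have hp : T ≤ ((p.1, -p.2) : EuclideanSpace ℝ (Fin n) × ℝ).2 := by
          simp only
          rw [← habs]; exact hcase
        have hRR : R ((p.1, -p.2) : EuclideanSpace ℝ (Fin n) × ℝ) = p := by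
          rw [hR_app]
          simp
        have ha := h3 ((p.1, -p.2)) hp
        have hb' := h4 ((p.1, -p.2)) hp
        simp only [hRR] at ha hb'
        rw [abs_le, habs, hAdef]
        constructor <;> linarith
    · -- middle region
      have h5 : Real.exp (-σ * T) ≤ Real.exp (-σ * |p.2|) := by
        apply Real.exp_le_exp.mpr
        have := abs_nonneg p.2
        nlinarith
      have h6 : M ≤ A * Real.exp (-σ * T) := by
        rw [hAdef, mul_assoc, ← Real.exp_add]
        have h7 : σ * T + -σ * T = 0 := by ring
        rw [h7, Real.exp_zero, mul_one]
      calc |w p| ≤ M := hM p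
      _ ≤ A * Real.exp (-σ * T) := h6
      _ ≤ A * Real.exp (-σ * |p.2|) := by
          apply mul_le_mul_of_nonneg_left h5
          positivity
  calc |w p| ≤ A * Real.exp (-σ * |p.2|) := hmain
  _ ≤ (A + 1) * Real.exp (-σ * |p.2|) := by nlinarith
end

section
/- Let n ≥ 1 and let V : ℝⁿ → ℝ be a twice continuously differentiable function which is bounded, nonnegative, and satisfies ΔV(x) - (3/4) V(x) ≥ 0 for all x ∈ ℝⁿ. Then V ≡ 0. -/
open Real Filter Set Topology

section Helpers

/-- cosh grows quadratically. -/
lemma quarter_sq_le_cosh (t : ℝ) : t ^ 2 / 4 ≤ Real.cosh t := by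
  have h2 : Real.cosh t = Real.cosh (t/2) ^ 2 + Real.sinh (t/2) ^ 2 := by
    rw [← Real.cosh_two_mul]; ring_nf
  have hs : (t/2) ^ 2 ≤ Real.sinh (t/2) ^ 2 := by
    rcases le_total 0 t with h | h
    · have := Real.self_le_sinh_iff.mpr (by linarith : (0:ℝ) ≤ t/2)
      nlinarith
    · have h1 : Real.sinh (t/2) ≤ t/2 := Real.sinh_le_self_iff.mpr (by linarith)
      nlinarith
  nlinarith [sq_nonneg (Real.cosh (t/2))]

/-- Second derivative test: at a local max of a C² function, `f'' ≤ 0`. -/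
lemma secondDeriv_nonpos_of_isLocalMax {f : ℝ → ℝ} (hf : ContDiff ℝ 2 f)
    (h : IsLocalMax f 0) : deriv (deriv f) 0 ≤ 0 := by
  by_contra hc
  push_neg at hc
  have hd1 : ContDiff ℝ 1 (deriv f) := by
    have : ContDiff ℝ (1+1) f := by norm_num; exact hf
    exact (contDiff_succ_iff_deriv.mp this).2.2
  have hD : HasDerivAt (deriv f) (deriv (deriv f) 0) 0 :=
    ((hd1.differentiable one_ne_zero) 0).hasDerivAt
  have h0 : deriv f 0 = 0 := h.deriv_eq_zero
  have hslope : Tendsto (slope (deriv f) 0) (𝓝[≠] 0) (𝓝 (deriv (deriv f) 0)) :=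
    hasDerivAt_iff_tendsto_slope.mp hD
  have hpos : ∀ᶠ t in 𝓝[>] (0:ℝ), 0 < deriv f t := by
    have : ∀ᶠ t in 𝓝[≠] (0:ℝ), 0 < slope (deriv f) 0 t :=
      hslope.eventually (eventually_gt_nhds hc)
    filter_upwards [nhdsWithin_mono 0 (fun t ht => (Set.mem_Ioi.mp ht).ne' : Set.Ioi (0:ℝ) ⊆ {0}ᶜ) this,
      self_mem_nhdsWithin] with t ht ht'
    have htpos : (0:ℝ) < t := ht'
    have h2 : 0 < t⁻¹ * (deriv f t - deriv f 0) := by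
      simpa [slope] using ht
    rw [h0, sub_zero] at h2
    have h3 := mul_pos htpos h2
    rwa [← mul_assoc, mul_inv_cancel₀ htpos.ne', one_mul] at h3
  have hmax : ∀ᶠ t in 𝓝[>] (0:ℝ), f t ≤ f 0 := nhdsWithin_le_nhds h
  obtain ⟨u, hu, hsub2⟩ := mem_nhdsGT_iff_exists_Ioo_subset.mp (hpos.and hmax)
  have hu0 : (0:ℝ) < u := hu
  set m := u / 2 with hm
  have hm0 : 0 < m := by positivity
  have hmu : m < u := by linarith
  have hmono : StrictMonoOn f (Set.Icc 0 m) := by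
    apply strictMonoOn_of_deriv_pos (convex_Icc 0 m) (hf.continuous.continuousOn)
    intro t ht
    rw [interior_Icc] at ht
    exact (hsub2 ⟨ht.1, lt_trans ht.2 hmu⟩).1
  have : f 0 < f m := hmono ⟨le_rfl, hm0.le⟩ ⟨hm0.le, le_rfl⟩ hm0
  exact absurd (hsub2 ⟨hm0, hmu⟩).2 (not_le.mpr this)


lemma line_second_deriv {n : ℕ} (u : EuclideanSpace ℝ (Fin n) → ℝ)
    (hu : ContDiff ℝ 2 u) (x v : EuclideanSpace ℝ (Fin n)) :
    deriv (deriv (fun t : ℝ => u (x + t • v))) 0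
      = fderiv ℝ (fun y => fderiv ℝ u y v) x v := by
  have hline : ∀ t : ℝ, HasDerivAt (fun s : ℝ => x + s • v) v t := by
    intro t
    have h1 : HasDerivAt (fun s : ℝ => s • v) ((1:ℝ) • v) t :=
      (hasDerivAt_id t).smul_const v
    simpa [one_smul] using h1.const_add x
  have hu1 : Differentiable ℝ u := hu.differentiable two_ne_zero
  have step1 : deriv (fun t : ℝ => u (x + t • v))
      = fun t : ℝ => fderiv ℝ u (x + t • v) v := by
    funext t
    exact ((hu1 (x + t • v)).hasFDerivAt.comp_hasDerivAt t (hline t)).deriv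
  have hfd : ContDiff ℝ 1 (fderiv ℝ u) := hu.fderiv_right (by norm_num)
  have hu2 : Differentiable ℝ (fun y => fderiv ℝ u y v) := by
    have : ContDiff ℝ 1 (fun y => fderiv ℝ u y v) :=
      (ContinuousLinearMap.apply ℝ ℝ v).contDiff.comp hfd
    exact this.differentiable one_ne_zero
  rw [step1]
  have h0 : x + (0:ℝ) • v = x := by simp
  have := ((hu2 (x + (0:ℝ) • v)).hasFDerivAt.comp_hasDerivAt 0 (hline 0)).deriv
  rw [h0] at this
  exact this


lemma cosh_sum_line_deriv2 {n : ℕ} (k ε : ℝ) (x : EuclideanSpace ℝ (Fin n)) (j : Fin n) :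
    deriv (deriv (fun t : ℝ =>
        ε * ∑ i, Real.cosh (k * ((x + t • EuclideanSpace.single j (1:ℝ)) i)))) 0
      = ε * (k * k * Real.cosh (k * x j)) := by
  set c : Fin n → ℝ := fun i => if i = j then 1 else 0 with hc
  have hcoord : ∀ (t : ℝ) (i : Fin n),
      (x + t • EuclideanSpace.single j (1:ℝ)) i = x i + t * c i := by
    intro t i
    simp [hc, EuclideanSpace.single_apply, PiLp.add_apply, PiLp.smul_apply, smul_eq_mul]
  have hfun : (fun t : ℝ =>
      ε * ∑ i, Real.cosh (k * ((x + t • EuclideanSpace.single j (1:ℝ)) i)))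
      = fun t => ε * ∑ i, Real.cosh (k * (x i + t * c i)) := by
    funext t
    congr 1
    exact Finset.sum_congr rfl fun i _ => by rw [hcoord]
  have inner : ∀ (i : Fin n) (t : ℝ),
      HasDerivAt (fun s : ℝ => k * (x i + s * c i)) (k * (1 * c i)) t := by
    intro i t
    exact (((hasDerivAt_id t).mul_const (c i)).const_add (x i)).const_mul k
  have hd1 : ∀ t : ℝ, HasDerivAt (fun s => ε * ∑ i, Real.cosh (k * (x i + s * c i)))
      (ε * ∑ i, Real.sinh (k * (x i + t * c i)) * (k * (1 * c i))) t := by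
    intro t
    refine HasDerivAt.const_mul ε (HasDerivAt.fun_sum fun i _ => ?_)
    exact (Real.hasDerivAt_cosh _).comp t (inner i t)
  have hD1 : deriv (fun s => ε * ∑ i, Real.cosh (k * (x i + s * c i)))
      = fun t => ε * ∑ i, Real.sinh (k * (x i + t * c i)) * (k * (1 * c i)) :=
    funext fun t => (hd1 t).deriv
  have hd2 : HasDerivAt
      (fun t => ε * ∑ i, Real.sinh (k * (x i + t * c i)) * (k * (1 * c i)))
      (ε * ∑ i, Real.cosh (k * (x i + 0 * c i)) * (k * (1 * c i)) * (k * (1 * c i))) 0 := by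
    refine HasDerivAt.const_mul ε (HasDerivAt.fun_sum fun i _ => ?_)
    exact ((Real.hasDerivAt_sinh _).comp 0 (inner i 0)).mul_const _
  rw [hfun, hD1, hd2.deriv]
  congr 1
  have hterm : ∀ i : Fin n,
      Real.cosh (k * (x i + 0 * c i)) * (k * (1 * c i)) * (k * (1 * c i))
        = if i = j then k * k * Real.cosh (k * x j) else 0 := by
    intro i
    by_cases h : i = j
    · subst h; simp [hc]; ring
    · simp [hc, h]
  rw [Finset.sum_congr rfl fun i _ => hterm i, Finset.sum_ite_eq' Finset.univ j]
  simp

end Helpers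

/-- The Euclidean Laplacian of a function on `ℝⁿ`, as the sum of second partial
derivatives in the coordinate directions. -/
noncomputable def lap {n : ℕ} (u : EuclideanSpace ℝ (Fin n) → ℝ)
    (x : EuclideanSpace ℝ (Fin n)) : ℝ :=
  ∑ i, fderiv ℝ (fun y => fderiv ℝ u y (EuclideanSpace.single i 1)) x (EuclideanSpace.single i 1)

/-- Liouville-type result : a bounded nonnegative `C²` subsolution of `Δ - 3/4` on `ℝⁿ`
vanishes identically. -/
theorem liouville_subsolution (n : ℕ) (hn : 1 ≤ n)
    (V : EuclideanSpace ℝ (Fin n) → ℝ) (hV : ContDiff ℝ 2 V)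
    (hb : ∃ C : ℝ, ∀ x, |V x| ≤ C) (hnn : ∀ x, 0 ≤ V x)
    (hsub : ∀ x, 0 ≤ lap V x - (3 / 4) * V x) :
    ∀ x, V x = 0 := by
  obtain ⟨C, hC⟩ := hb
  set k : ℝ := Real.sqrt 3 / 2 with hkdef
  have hk2 : k * k = 3 / 4 := by
    rw [hkdef]
    rw [div_mul_div_comm, Real.mul_self_sqrt (by norm_num : (3:ℝ) ≥ 0)]
    norm_num
  set S : EuclideanSpace ℝ (Fin n) → ℝ := fun y => ∑ i, Real.cosh (k * y i) with hSdef
  have hSC2 : ContDiff ℝ 2 S := by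
    apply ContDiff.sum
    intro i _
    exact (Real.contDiff_cosh.of_le le_top).comp
      (contDiff_const.mul (EuclideanSpace.proj (𝕜 := ℝ) (ι := Fin n) i).contDiff)
  have hSnn : ∀ y, 0 ≤ S y := by
    intro y
    exact Finset.sum_nonneg fun i _ => (Real.cosh_pos _).le
  have hSlb : ∀ y : EuclideanSpace ℝ (Fin n), k * k / 4 * ‖y‖ ^ 2 ≤ S y := by
    intro y
    have hnorm : ‖y‖ ^ 2 = ∑ i, y i ^ 2 := by
      rw [EuclideanSpace.norm_eq, Real.sq_sqrt (Finset.sum_nonneg fun i _ => sq_nonneg _)]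
      exact Finset.sum_congr rfl fun i _ => by rw [Real.norm_eq_abs, sq_abs]
    rw [hnorm, Finset.mul_sum]
    apply Finset.sum_le_sum
    intro i _
    calc k * k / 4 * y i ^ 2 = (k * y i) ^ 2 / 4 := by ring
      _ ≤ Real.cosh (k * y i) := quarter_sq_le_cosh _
  -- the key estimate, for every positive ε
  have key : ∀ ε : ℝ, 0 < ε → ∀ y, V y ≤ ε * S y := by
    intro ε hε
    set φ : EuclideanSpace ℝ (Fin n) → ℝ := fun y => ε * S y with hφdef
    have hφC2 : ContDiff ℝ 2 φ := contDiff_const.mul hSC2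
    set W : EuclideanSpace ℝ (Fin n) → ℝ := fun y => V y - φ y with hWdef
    have hWcont : Continuous W := (hV.continuous).sub hφC2.continuous
    -- W tends to -∞ at infinity
    have hWbot : Tendsto W (cocompact _) atBot := by
      apply tendsto_atBot_mono
        (f := fun y : EuclideanSpace ℝ (Fin n) => C - ε * (k * k / 4) * ‖y‖ ^ 2)
      · intro y
        have h1 : V y ≤ C := le_of_abs_le (hC y)
        have h2 : ε * (k * k / 4 * ‖y‖ ^ 2) ≤ ε * S y :=
          mul_le_mul_of_nonneg_left (hSlb y) hε.le
        simp only [hWdef, hφdef]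
        nlinarith
      · have hnorm : Tendsto (fun y : EuclideanSpace ℝ (Fin n) => ‖y‖)
            (cocompact _) atTop := tendsto_norm_cocompact_atTop
        have hsq : Tendsto (fun y : EuclideanSpace ℝ (Fin n) => ‖y‖ ^ 2)
            (cocompact _) atTop := (tendsto_pow_atTop two_ne_zero).comp hnorm
        have hmul : Tendsto (fun y : EuclideanSpace ℝ (Fin n) =>
            ε * (k * k / 4) * ‖y‖ ^ 2) (cocompact _) atTop := by
          apply Tendsto.const_mul_atTop _ hsq
          have : 0 < k * k := by rw [hk2]; norm_num
          positivity
        have hneg := tendsto_neg_atTop_atBot.comp hmul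
        have := tendsto_atBot_add_const_left (cocompact (EuclideanSpace ℝ (Fin n))) C hneg
        simpa [sub_eq_add_neg, Function.comp] using this
    obtain ⟨z, hz⟩ := hWcont.exists_forall_ge hWbot
    -- at the max point, compare second derivatives along coordinate lines
    have hdir : ∀ j : Fin n,
        fderiv ℝ (fun y => fderiv ℝ V y (EuclideanSpace.single j 1)) z
            (EuclideanSpace.single j 1)
          ≤ ε * (k * k * Real.cosh (k * z j)) := by
      intro j
      set e : EuclideanSpace ℝ (Fin n) := EuclideanSpace.single j (1:ℝ) with hedef
      set f : ℝ → ℝ := fun t => V (z + t • e) with hfdef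
      set g : ℝ → ℝ := fun t => ε * ∑ i, Real.cosh (k * ((z + t • e) i)) with hgdef
      have hlineC2 : ContDiff ℝ 2 (fun t : ℝ => z + t • e) :=
        contDiff_const.add (contDiff_id.smul contDiff_const)
      have hfC2 : ContDiff ℝ 2 f := hV.comp hlineC2
      have hgC2 : ContDiff ℝ 2 g := hφC2.comp hlineC2
      have hmaxline : IsLocalMax (fun t => f t - g t) 0 := by
        apply Filter.Eventually.of_forall
        intro t
        have h1 := hz (z + t • e)
        have h2 : z + (0:ℝ) • e = z := by simp
        simpa [hWdef, hφdef, hSdef, hfdef, hgdef, h2] using h1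
      have htest := secondDeriv_nonpos_of_isLocalMax (hfC2.sub hgC2) hmaxline
      -- split the second derivative of the difference
      have hf1 : Differentiable ℝ f := hfC2.differentiable two_ne_zero
      have hg1 : Differentiable ℝ g := hgC2.differentiable two_ne_zero
      have hdf : ContDiff ℝ 1 (deriv f) := by
        have h11 : ContDiff ℝ (1+1) f := by norm_num; exact hfC2
        exact (contDiff_succ_iff_deriv.mp h11).2.2
      have hdg : ContDiff ℝ 1 (deriv g) := by
        have h11 : ContDiff ℝ (1+1) g := by norm_num; exact hgC2
        exact (contDiff_succ_iff_deriv.mp h11).2.2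
      have hsplit1 : deriv (fun t => f t - g t) = fun t => deriv f t - deriv g t :=
        funext fun t => deriv_sub (hf1 t) (hg1 t)
      have hsplit2 : deriv (deriv (fun t => f t - g t)) 0
          = deriv (deriv f) 0 - deriv (deriv g) 0 := by
        rw [hsplit1]
        exact deriv_sub ((hdf.differentiable one_ne_zero) 0) ((hdg.differentiable one_ne_zero) 0)
      rw [hsplit2] at htest
      have hfeq : deriv (deriv f) 0
          = fderiv ℝ (fun y => fderiv ℝ V y e) z e := line_second_deriv V hV z e
      have hgeq : deriv (deriv g) 0 = ε * (k * k * Real.cosh (k * z j)) :=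
        cosh_sum_line_deriv2 k ε z j
      rw [hfeq, hgeq] at htest
      linarith
    -- sum over directions
    have hlap : lap V z ≤ 3 / 4 * φ z := by
      have h1 : lap V z ≤ ∑ j, ε * (k * k * Real.cosh (k * z j)) :=
        Finset.sum_le_sum fun j _ => hdir j
      calc lap V z ≤ ∑ j, ε * (k * k * Real.cosh (k * z j)) := h1
        _ = k * k * (ε * ∑ j, Real.cosh (k * z j)) := by
            rw [Finset.mul_sum, Finset.mul_sum]
            exact Finset.sum_congr rfl fun j _ => by ring
        _ = 3 / 4 * φ z := by rw [hk2]
    have hVz : V z ≤ φ z := by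
      have := hsub z
      nlinarith
    intro y
    have h1 := hz y
    have h2 : W z ≤ 0 := by simp only [hWdef]; linarith
    have h3 : W y = V y - φ y := rfl
    have : V y - φ y ≤ 0 := by rw [← h3]; linarith
    simpa [hφdef] using this
  -- conclude: V x ≤ ε * S x for all ε > 0 forces V x ≤ 0
  intro x
  refine le_antisymm ?_ (hnn x)
  by_contra hpos
  push_neg at hpos
  have hS1 : 0 < S x + 1 := by have := hSnn x; linarith
  have hε : 0 < V x / (2 * (S x + 1)) := by positivity
  have hk := key _ hε x
  have hSx := hSnn x
  rw [div_mul_eq_mul_div, le_div_iff₀ (by positivity)] at hk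
  nlinarith
end
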